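/- The map χ : ℝₗ → C_k(ℝₗ, ℝ) assigning to each point x the characteristic function χ_x of the set [−x, ∞) (so χ_x(t) = 1 if t ≥ −x and χ_x(t) = 0 otherwise) is well defined (each χ_x is continuous on ℝₗ) and is a topological embedding of the Sorgenfrey line into the function space C_k(ℝₗ, ℝ) with the compact-open topology. -/

import Mathlib

open Set Topology

def SorgenfreyLine : Type := ℝ

notation "ℝₗ" => SorgenfreyLine

noncomputable instance : Field ℝₗ := inferInstanceAs (Field ℝ)

noncomputable instance : LinearOrder ℝₗ := inferInstanceAs (LinearOrder ℝ)

instance : IsStrictOrderedRing ℝₗ := inferInstanceAs (IsStrictOrderedRing ℝ)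

instance : TopologicalSpace ℝₗ :=
  TopologicalSpace.generateFrom {s : Set ℝₗ | ∃ a b : ℝₗ, a < b ∧ s = Set.Ico a b}

/-- The spread of a topological space: the supremum of cardinalities of discrete subspaces. -/
noncomputable def spread (X : Type*) [TopologicalSpace X] : Cardinal :=
  sSup {c : Cardinal | ∃ D : Set X, DiscreteTopology D ∧ Cardinal.mk D = c}

def Cometrizable (Y : Type*) [t : TopologicalSpace Y] : Prop :=
  ∃ τ : TopologicalSpace Y, t ≤ τ ∧ @TopologicalSpace.MetrizableSpace Y τ ∧
    ∀ y : Y, ∀ U ∈ nhds y, ∃ V ∈ nhds y, V ⊆ U ∧ IsClosed[τ] V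

def IsKDense {X : Type*} [TopologicalSpace X] (D : Set X) : Prop :=
  ∀ K : Set X, IsCompact K → ∃ K' : Set X, IsCompact K' ∧ K ⊆ K' ∧ K' ⊆ closure (D ∩ K')

def KSeparable (X : Type*) [TopologicalSpace X] : Prop :=
  ∃ D : Set X, D.Countable ∧ IsKDense D

noncomputable instance : Archimedean ℝₗ := inferInstanceAs (Archimedean ℝ)

lemma SL.isOpen_Ico {a b : ℝₗ} (h : a < b) : IsOpen (Ico a b) :=
  TopologicalSpace.isOpen_generateFrom_of_mem ⟨a, b, h, rfl⟩

lemma SL.exists_Ico_subset {U : Set ℝₗ} (hU : IsOpen U) :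
    ∀ x ∈ U, ∃ b, x < b ∧ Ico x b ⊆ U := by
  have h : TopologicalSpace.GenerateOpen
      {s : Set ℝₗ | ∃ a b : ℝₗ, a < b ∧ s = Set.Ico a b} U := hU
  clear hU
  induction h with
  | basic s hs =>
    obtain ⟨a, b, hab, rfl⟩ := hs
    exact fun x hx => ⟨b, hx.2, fun y hy => ⟨le_trans hx.1 hy.1, hy.2⟩⟩
  | univ => exact fun x _ => ⟨x + 1, lt_add_one x, fun _ _ => trivial⟩
  | inter s t _ _ ihs iht =>
    intro x hx
    obtain ⟨b1, hb1, hs1⟩ := ihs x hx.1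
    obtain ⟨b2, hb2, hs2⟩ := iht x hx.2
    exact ⟨min b1 b2, lt_min hb1 hb2, fun y hy =>
      ⟨hs1 ⟨hy.1, lt_of_lt_of_le hy.2 (min_le_left _ _)⟩,
       hs2 ⟨hy.1, lt_of_lt_of_le hy.2 (min_le_right _ _)⟩⟩⟩
  | sUnion S _ ih =>
    intro x hx
    obtain ⟨s, hsS, hxs⟩ := hx
    obtain ⟨b, hb, hsub⟩ := ih s hsS x hxs
    exact ⟨b, hb, hsub.trans (subset_sUnion_of_mem hsS)⟩

lemma SL.mem_nhds_Ico {x b : ℝₗ} (h : x < b) : Ico x b ∈ nhds x :=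
  (SL.isOpen_Ico h).mem_nhds ⟨le_refl x, h⟩

lemma SL.isOpen_Ici (a : ℝₗ) : IsOpen (Ici a) := by
  have : (Ici a : Set ℝₗ) = ⋃ n : ℕ, Ico a (a + (n + 1)) := by
    ext t
    simp only [mem_Ici, mem_iUnion, mem_Ico]
    constructor
    · intro ht
      obtain ⟨n, hn⟩ := exists_nat_gt (t - a)
      exact ⟨n, ht, by linarith⟩
    · rintro ⟨n, h1, _⟩; exact h1
  rw [this]
  exact isOpen_iUnion fun n => SL.isOpen_Ico (by linarith [Nat.cast_nonneg (α := ℝₗ) n])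

lemma SL.isOpen_Iio (a : ℝₗ) : IsOpen (Iio a) := by
  have : (Iio a : Set ℝₗ) = ⋃ n : ℕ, Ico (a - (n + 1)) a := by
    ext t
    simp only [mem_Iio, mem_iUnion, mem_Ico]
    constructor
    · intro ht
      obtain ⟨n, hn⟩ := exists_nat_gt (a - t)
      exact ⟨n, by linarith, ht⟩
    · rintro ⟨n, _, h2⟩; exact h2
  rw [this]
  exact isOpen_iUnion fun n => SL.isOpen_Ico (by linarith [Nat.cast_nonneg (α := ℝₗ) n])

lemma SL.isClopen_Ici (a : ℝₗ) : IsClopen (Ici a) :=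
  ⟨by rw [← isOpen_compl_iff, compl_Ici]; exact SL.isOpen_Iio a, SL.isOpen_Ici a⟩

lemma SL.continuous_step (a : ℝₗ) :
    Continuous fun t : ℝₗ => if a ≤ t then (1 : ℝ) else 0 := by
  apply Continuous.if _ continuous_const continuous_const
  intro x hx
  have : frontier {t : ℝₗ | a ≤ t} = ∅ := by
    have h : {t : ℝₗ | a ≤ t} = Ici a := rfl
    rw [h, (SL.isClopen_Ici a).frontier_eq]
  simp [this] at hx

lemma SL.continuous_add : Continuous fun p : ℝₗ × ℝₗ => p.1 + p.2 := by
  have : Continuous[_, TopologicalSpace.generateFrom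
      {s : Set ℝₗ | ∃ a b : ℝₗ, a < b ∧ s = Set.Ico a b}]
      (fun p : ℝₗ × ℝₗ => p.1 + p.2) := by
    rw [continuous_generateFrom_iff]
    rintro s ⟨a, b, hab, rfl⟩
    rw [isOpen_iff_mem_nhds]
    rintro ⟨x, y⟩ hp
    simp only [mem_preimage, mem_Ico] at hp
    set δ : ℝₗ := (b - (x + y)) / 2 with hδ
    have hδpos : 0 < δ := by simp only [hδ]; linarith [hp.2]
    have hsub : Ico x (x + δ) ×ˢ Ico y (y + δ) ⊆ (fun p : ℝₗ × ℝₗ => p.1 + p.2) ⁻¹' Ico a b := by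
      rintro ⟨u, v⟩ ⟨hu, hv⟩
      simp only [mem_Ico] at hu hv
      refine ⟨le_trans hp.1 (by dsimp; linarith [hu.1, hv.1]), ?_⟩
      dsimp
      have : u + v < x + y + 2 * δ := by linarith [hu.2, hv.2]
      simp only [hδ] at this; linarith
    exact Filter.mem_of_superset
      (prod_mem_nhds (SL.mem_nhds_Ico (by linarith)) (SL.mem_nhds_Ico (by linarith))) hsub
  exact this

/-- The map assigning to $x$ the characteristic function of $[-x,\infty)$ is a well-defined
topological embedding of the Sorgenfrey line into $C_k(\mathbb{S},\mathbb{R})$. -/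
theorem sorgenfrey_embeds_in_Ck :
    ∃ χ : ℝₗ → C(ℝₗ, ℝ),
      (∀ x t : ℝₗ, χ x t = if -x ≤ t then (1 : ℝ) else 0) ∧ IsEmbedding χ := by
  set χ : ℝₗ → C(ℝₗ, ℝ) := fun x => ⟨fun t => if -x ≤ t then (1 : ℝ) else 0,
    SL.continuous_step (-x)⟩ with hχ
  have hval : ∀ x t : ℝₗ, χ x t = if -x ≤ t then (1 : ℝ) else 0 := fun _ _ => rfl
  refine ⟨χ, hval, ?_⟩
  -- continuity of χ
  have hcont : Continuous χ := by
    apply ContinuousMap.continuous_of_continuous_uncurry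
    have : (Function.uncurry fun (x t : ℝₗ) => (χ x) t) =
        (fun s : ℝₗ => if (0 : ℝₗ) ≤ s then (1 : ℝ) else 0) ∘ (fun p : ℝₗ × ℝₗ => p.1 + p.2) := by
      funext p
      simp only [Function.uncurry, Function.comp_apply, hval]
      exact if_congr (by constructor <;> intro h <;> linarith) rfl rfl
    rw [this]
    exact (SL.continuous_step 0).comp SL.continuous_add
  -- injectivity
  have hinj : Function.Injective χ := by
    intro x y hxy
    have h1 : χ x (-x) = χ y (-x) := by rw [hxy]
    have h2 : χ y (-y) = χ x (-y) := by rw [hxy]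
    rw [hval, hval, if_pos le_rfl] at h1
    rw [hval, hval, if_pos le_rfl] at h2
    have hx : -y ≤ -x := by by_contra h; rw [if_neg h] at h1; norm_num at h1
    have hy : -x ≤ -y := by by_contra h; rw [if_neg h] at h2; norm_num at h2
    have := le_antisymm hx hy
    linarith [neg_le_neg hx]
  refine ⟨isInducing_iff_nhds.mpr fun x => le_antisymm ?_ ?_, hinj⟩
  · exact (hcont.tendsto x).le_comap
  · -- comap ≤ 𝓝 x
    intro S hS
    obtain ⟨U, hUS, hUopen, hxU⟩ := mem_nhds_iff.mp hS
    obtain ⟨b, hxb, hIco⟩ := SL.exists_Ico_subset hUopen x hxU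
    rw [Filter.mem_comap]
    refine ⟨{g : C(ℝₗ, ℝ) | (1 : ℝ)/2 < g (-x)} ∩ {g : C(ℝₗ, ℝ) | g (-b) < 1/2}, ?_, ?_⟩
    · apply Filter.inter_mem
      · refine IsOpen.mem_nhds ?_ ?_
        · exact IsOpen.preimage (continuous_eval_const (-x)) (isOpen_Ioi (a := (1:ℝ)/2))
        · simp only [mem_setOf_eq, hval, if_pos (le_refl (-x))]; norm_num
      · refine IsOpen.mem_nhds ?_ ?_
        · exact IsOpen.preimage (continuous_eval_const (-b)) (isOpen_Iio (a := (1:ℝ)/2))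
        · have : ¬(-x ≤ -b) := by simp; exact hxb
          simp only [mem_setOf_eq, hval, if_neg this]; norm_num
    · intro y hy
      simp only [mem_preimage, mem_inter_iff, mem_setOf_eq, hval] at hy
      obtain ⟨h1, h2⟩ := hy
      have hxy : x ≤ y := by
        by_contra h
        rw [if_neg (by simp; linarith)] at h1; norm_num at h1
      have hyb : y < b := by
        by_contra h
        rw [if_pos (by simp; linarith)] at h2; norm_num at h2
      exact hUS (hIco ⟨hxy, hyb⟩)
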